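/- Suppose e > 1 and z ∈ L((σ)) is nonzero, satisfies D(D(z)) = 2z³ + t·z + α, and has a nonzero coefficient at some index not divisible by e. Then the order of z is negative. -/

import Mathlib

lemma aux_single_mul_coeff {L : Type*} [Field L] (x : LaurentSeries L) (s : L) (k n : ℤ) :
    (HahnSeries.single k s * x).coeff n = s * x.coeff (n - k) := by
  have := HahnSeries.coeff_single_mul_add (r := s) (x := x) (a := n - k) (b := k)
  rwa [sub_add_cancel] at this

lemma aux_mul_single_coeff {L : Type*} [Field L] (x : LaurentSeries L) (s : L) (k n : ℤ) :
    (x * HahnSeries.single k s).coeff n = x.coeff (n - k) * s := by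
  have := HahnSeries.coeff_mul_single_add (r := s) (x := x) (a := n - k) (b := k)
  rwa [sub_add_cancel] at this

/-- The field of formal Laurent series over a field of characteristic zero has
characteristic zero. -/
instance {L : Type*} [Field L] [CharZero L] : CharZero (LaurentSeries L) where
  cast_injective m n h := by
    have hc : (HahnSeries.C (m : L) : LaurentSeries L) = HahnSeries.C (n : L) := by
      rw [map_natCast, map_natCast]; exact h
    exact Nat.cast_injective (HahnSeries.C_injective hc)

/-- Suppose `e > 1` and `z ∈ L((σ))` is nonzero, satisfies
`D(D(z)) = 2z³ + t·z + α`, and has a nonzero coefficient at some index not divisible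
by `e`. Then the order of `z` is negative. -/
theorem statement_3
    (L : Type*) [Field L] [CharZero L]
    (e : ℕ) (he : 0 < e)
    (γ t α : L) (hγ : γ ≠ 0)
    (σ : LaurentSeries L) (hσ : σ = HahnSeries.single (1 : ℤ) 1)
    (D : Derivation ℚ (LaurentSeries L) (LaurentSeries L))
    (hD₁ : ∀ a : L, ∀ n : ℤ, (n < 0 ∨ ¬ (e : ℤ) ∣ n) → (D (HahnSeries.C a)).coeff n = 0)
    (hD₂ : ∃ c₁ c₂ c₃ : L,
      σ ^ (e - 1) * D σ =
        HahnSeries.C ((e : L)⁻¹) *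
          (HahnSeries.C γ + HahnSeries.C c₁ * σ ^ e + HahnSeries.C c₂ * σ ^ (2 * e)
            + HahnSeries.C c₃ * σ ^ (3 * e)))
    (hD₃ : ∀ f : LaurentSeries L, ∀ n : ℤ,
      (D f).coeff n = ∑ᶠ i : ℤ,
        (D (HahnSeries.C (f.coeff i)) * σ ^ i
          + (i : LaurentSeries L) * HahnSeries.C (f.coeff i) * σ ^ (i - 1) * D σ).coeff n)
    (he₁ : 1 < e)
    (z : LaurentSeries L) (hz₀ : z ≠ 0)
    (hz : D (D z) = 2 * z ^ 3 + HahnSeries.C t * z + HahnSeries.C α)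
    (hn : ∃ n : ℤ, ¬ (e : ℤ) ∣ n ∧ z.coeff n ≠ 0) :
    z.order < 0 := by
  classical
  obtain ⟨c₁, c₂, c₃, hc⟩ := hD₂
  set P : LaurentSeries L := HahnSeries.C γ + HahnSeries.C c₁ * σ ^ e
      + HahnSeries.C c₂ * σ ^ (2 * e) + HahnSeries.C c₃ * σ ^ (3 * e) with hPdef
  have heL : (e : L) ≠ 0 := Nat.cast_ne_zero.mpr he.ne'
  have hσz : ∀ i : ℤ, σ ^ i = HahnSeries.single i (1 : L) := fun i => by
    rw [hσ, ← RatFunc.single_zpow]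
  have hσn : ∀ k : ℕ, σ ^ k = HahnSeries.single ((k : ℕ) : ℤ) (1 : L) := fun k => by
    rw [← zpow_natCast, hσz]
  have hσ0 : σ ≠ 0 := by
    rw [hσ]; exact HahnSeries.single_ne_zero one_ne_zero
  -- coefficients of P
  have hPco : ∀ j : ℤ, P.coeff j = (HahnSeries.single (0 : ℤ) γ).coeff j
      + (HahnSeries.single ((e : ℕ) : ℤ) c₁).coeff j
      + (HahnSeries.single ((2 * e : ℕ) : ℤ) c₂).coeff j
      + (HahnSeries.single ((3 * e : ℕ) : ℤ) c₃).coeff j := by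
    intro j
    rw [hPdef, hσn e, hσn (2 * e), hσn (3 * e), HahnSeries.C_apply, HahnSeries.C_apply,
      HahnSeries.C_apply, HahnSeries.C_apply, HahnSeries.single_mul_single,
      HahnSeries.single_mul_single, HahnSeries.single_mul_single]
    simp only [HahnSeries.coeff_add, zero_add, mul_one]
  have hPc0 : P.coeff 0 = γ := by
    rw [hPco, HahnSeries.coeff_single_same, HahnSeries.coeff_single_of_ne (by omega),
      HahnSeries.coeff_single_of_ne (by omega), HahnSeries.coeff_single_of_ne (by omega)]
    ring
  have hPzero : ∀ j : ℤ, (j < 0 ∨ ¬ (e : ℤ) ∣ j) → P.coeff j = 0 := by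
    intro j hj
    have h0 : j ≠ 0 := by
      rcases hj with h | h
      · omega
      · rintro rfl; exact h (dvd_zero _)
    have h1 : j ≠ ((e : ℕ) : ℤ) := by
      rcases hj with h | h
      · omega
      · rintro rfl; exact h dvd_rfl
    have h2 : j ≠ ((2 * e : ℕ) : ℤ) := by
      rcases hj with h | h
      · omega
      · rintro rfl; exact h ⟨2, by push_cast; ring⟩
    have h3 : j ≠ ((3 * e : ℕ) : ℤ) := by
      rcases hj with h | h
      · omega
      · rintro rfl; exact h ⟨3, by push_cast; ring⟩
    rw [hPco, HahnSeries.coeff_single_of_ne h0, HahnSeries.coeff_single_of_ne h1,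
      HahnSeries.coeff_single_of_ne h2, HahnSeries.coeff_single_of_ne h3]
    ring
  -- rewriting D σ
  have hDσ : ∀ i : ℤ, σ ^ (i - 1) * D σ = σ ^ (i - e) * (HahnSeries.C (e : L)⁻¹ * P) := by
    intro i
    have h1 : σ ^ (i - 1) = σ ^ (i - e) * σ ^ ((e : ℤ) - 1) := by
      rw [← zpow_add₀ hσ0]; ring_nf
    have h2 : σ ^ ((e : ℤ) - 1) = σ ^ (e - 1 : ℕ) := by
      rw [← zpow_natCast]; congr 1; omega
    rw [h1, h2, mul_assoc, hc]
  -- the key coefficient computation for each summand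
  have hkey : ∀ (s : L) (i n : ℤ),
      (D (HahnSeries.C s) * σ ^ i
        + (i : LaurentSeries L) * HahnSeries.C s * σ ^ (i - 1) * D σ).coeff n
      = (D (HahnSeries.C s)).coeff (n - i) + (i : L) * s * (e : L)⁻¹ * P.coeff (n - i + e) := by
    intro s i n
    rw [HahnSeries.coeff_add]
    congr 1
    · rw [hσz, aux_mul_single_coeff, mul_one]
    · rw [mul_assoc ((i : LaurentSeries L) * HahnSeries.C s), hDσ i]
      have hi : (i : LaurentSeries L) * HahnSeries.C s = HahnSeries.single (0 : ℤ) ((i : L) * s) := by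
        rw [← map_intCast (HahnSeries.C (Γ := ℤ) (R := L)) i, ← map_mul, HahnSeries.C_apply]
      rw [hi, hσz (i - (e : ℤ)), HahnSeries.C_apply, aux_single_mul_coeff,
        aux_single_mul_coeff, aux_single_mul_coeff]
      rw [show n - 0 - (i - (e : ℤ)) - 0 = n - i + e by ring]
      ring
  -- the main formula for coefficients of D f
  have hDc : ∀ (f : LaurentSeries L) (n : ℤ),
      (∀ i : ℤ, i < n + e → (e : ℤ) ∣ (n - i) → f.coeff i = 0) →
      (D f).coeff n = ((n + e : ℤ) : L) * f.coeff (n + e) * (e : L)⁻¹ * γ := by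
    intro f n hf
    rw [hD₃ f n, finsum_eq_single _ (n + (e : ℤ)) ?_]
    · rw [hkey (f.coeff (n + e)) (n + e) n]
      rw [hD₁ _ _ (Or.inl (by omega)), zero_add,
        show n - (n + (e : ℤ)) + e = 0 by ring, hPc0]
    · intro i hi
      rw [hkey (f.coeff i) i n]
      by_cases hdvd : (e : ℤ) ∣ (n - i)
      · by_cases hlt : i < n + e
        · rw [hf i hlt hdvd]
          simp
        · have hgt : n + (e : ℤ) < i := by
            rcases lt_or_eq_of_le (not_lt.mp hlt) with h | h
            · exact h
            · exact absurd h.symm hi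
          rw [hD₁ _ _ (Or.inl (by omega)), hPzero _ (Or.inl (by omega))]
          ring
      · rw [hD₁ _ _ (Or.inr hdvd), hPzero _ (Or.inr ?_)]
        · ring
        · intro hd
          exact hdvd (by have := dvd_sub hd (dvd_refl (e : ℤ)); simpa using this)
  -- main argument
  by_contra hord
  push_neg at hord
  have hneg : ∀ i : ℤ, i < 0 → z.coeff i = 0 := fun i hi =>
    HahnSeries.coeff_eq_zero_of_lt_order (lt_of_lt_of_le hi hord)
  set S : Set ℤ := {n : ℤ | ¬ (e : ℤ) ∣ n ∧ z.coeff n ≠ 0} with hSdef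
  have hSsub : S ⊆ z.support := fun n hn => hn.2
  have hSwf : S.IsWF := z.isWF_support.mono hSsub
  have hSne : S.Nonempty := by
    obtain ⟨n, hn1, hn2⟩ := hn
    exact ⟨n, hn1, hn2⟩
  set m : ℤ := hSwf.min hSne with hmdef
  have hmS : m ∈ S := hSwf.min_mem hSne
  have hmin : ∀ i ∈ S, ¬ i < m := fun i hi => hSwf.not_lt_min hSne hi
  have hmne : ¬ (e : ℤ) ∣ m := hmS.1
  have hmz : z.coeff m ≠ 0 := hmS.2
  have hm0 : 0 ≤ m := by
    by_contra h
    exact hmz (hneg m (by omega))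
  have hmne0 : m ≠ 0 := fun h => hmne (by rw [h]; exact dvd_zero _)
  have hmnee : m ≠ (e : ℤ) := fun h => hmne (by rw [h])
  have hzlow : ∀ i : ℤ, i < m → (e : ℤ) ∣ (m - i) → z.coeff i = 0 := by
    intro i hi hd
    by_contra hne
    have hie : ¬ (e : ℤ) ∣ i := fun hdi =>
      hmne (by have := dvd_add hd hdi; simpa using this)
    exact hmin i ⟨hie, hne⟩ hi
  -- first derivative
  have hDz : (D z).coeff (m - e) = ((m : ℤ) : L) * z.coeff m * (e : L)⁻¹ * γ := by
    have := hDc z (m - e) (fun i hi hd => hzlow i (by omega)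
      (by obtain ⟨k, hk⟩ := hd; exact ⟨k + 1, by linear_combination hk⟩))
    rwa [show m - (e : ℤ) + e = m by ring] at this
  have hDzlow : ∀ i : ℤ, i < m - 2 * e + e → (e : ℤ) ∣ (m - 2 * e - i) → (D z).coeff i = 0 := by
    intro i hi hd
    have hmi : (e : ℤ) ∣ (m - i) := by
      obtain ⟨k, hk⟩ := hd; exact ⟨k + 2, by linear_combination hk⟩
    have h1 := hDc z i (fun j hj hdj => hzlow j (by omega)
      (by obtain ⟨k, hk⟩ := hdj; obtain ⟨k', hk'⟩ := hmi;
          exact ⟨k' + k, by linear_combination hk' + hk⟩))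
    rw [h1, hzlow (i + e) (by omega)
      (by obtain ⟨k', hk'⟩ := hmi; exact ⟨k' - 1, by linear_combination hk'⟩)]
    ring
  -- second derivative
  have hDDz : (D (D z)).coeff (m - 2 * e)
      = ((m - e : ℤ) : L) * (((m : ℤ) : L) * z.coeff m * (e : L)⁻¹ * γ) * (e : L)⁻¹ * γ := by
    have := hDc (D z) (m - 2 * e) hDzlow
    rw [show m - 2 * (e : ℤ) + e = m - e by ring, hDz] at this
    exact this
  -- LHS is nonzero
  have hLne : (D (D z)).coeff (m - 2 * e) ≠ 0 := by
    rw [hDDz]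
    have h1 : ((m - (e : ℤ) : ℤ) : L) ≠ 0 := Int.cast_ne_zero.mpr (sub_ne_zero.mpr hmnee)
    have h2 : ((m : ℤ) : L) ≠ 0 := Int.cast_ne_zero.mpr hmne0
    have h3 : ((e : L)⁻¹) ≠ 0 := inv_ne_zero heL
    exact mul_ne_zero (mul_ne_zero (mul_ne_zero h1
      (mul_ne_zero (mul_ne_zero (mul_ne_zero h2 hmz) h3) hγ)) h3) hγ
  -- RHS is zero
  have hsupp : ∀ x ∈ z.support, 0 ≤ x ∧ ((e : ℤ) ∣ x ∨ m ≤ x) := by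
    intro x hx
    constructor
    · by_contra h; exact hx (hneg x (by omega))
    · by_cases hdx : (e : ℤ) ∣ x
      · exact Or.inl hdx
      · exact Or.inr (le_of_not_gt (hmin x ⟨hdx, hx⟩))
  have hz3 : (z ^ 3).coeff (m - 2 * e) = 0 := by
    by_contra h
    have hmem : m - 2 * (e : ℤ) ∈ (z * z * z).support := by
      rw [show z * z * z = z ^ 3 by ring]; exact h
    obtain ⟨ab, hab, c, hcmem, hsum⟩ := HahnSeries.support_mul_subset hmem
    obtain ⟨a, hamem, b, hbmem, hab'⟩ := HahnSeries.support_mul_subset hab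
    obtain ⟨ha0, haD⟩ := hsupp a hamem
    obtain ⟨hb0, hbD⟩ := hsupp b hbmem
    obtain ⟨hc0, hcD⟩ := hsupp c hcmem
    simp only at hsum hab'
    have habc : a + b + c = m - 2 * e := by omega
    rcases haD with ha | ha
    · rcases hbD with hb | hb
      · rcases hcD with hcc | hcc
        · refine hmne ?_
          have h1 := dvd_add (dvd_add ha hb) hcc
          rw [habc] at h1
          have h2 : (e : ℤ) ∣ m - 2 * e + 2 * e := dvd_add h1 ⟨2, by ring⟩
          simpa using h2
        · omega
      · omega
    · omega
  have hzk : z.coeff (m - 2 * e) = 0 :=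
    hzlow _ (by omega) ⟨2, by ring⟩
  have hCα : (HahnSeries.C α : LaurentSeries L).coeff (m - 2 * e) = 0 := by
    rw [HahnSeries.C_apply, HahnSeries.coeff_single, if_neg ?_]
    intro h0
    refine hmne ?_
    have hm2 : m = 2 * e := by omega
    rw [hm2]
    exact ⟨2, by ring⟩
  have hRz : (2 * z ^ 3 + HahnSeries.C t * z + HahnSeries.C α).coeff (m - 2 * e) = 0 := by
    simp only [HahnSeries.coeff_add]
    rw [two_mul, HahnSeries.coeff_add, hz3, HahnSeries.C_apply, aux_single_mul_coeff,
      show m - 2 * (e : ℤ) - 0 = m - 2 * e by ring, hzk, hCα]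
    ring
  rw [hz] at hLne
  exact hLne hRz
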